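/- Let a and m be positive integers where a is even, and let n = am. If D_1 is an antichain in the Bruhat order of A(a, a/2) and D_2 is an antichain in the Bruhat order of A(m, 2), then there is an antichain of size |D_1|·|D_2|^{a²} in the Bruhat order of A(n, n/2). -/

import Mathlib

open Finset

/-- A matrix of zeros and ones. -/
def ZeroOne {m n : ℕ} (A : Matrix (Fin m) (Fin n) ℕ) : Prop :=
  ∀ i j, A i j = 0 ∨ A i j = 1

/-- Sum of the entries of row `i`. -/
def rowSum {m n : ℕ} (A : Matrix (Fin m) (Fin n) ℕ) (i : Fin m) : ℕ :=
  ∑ j, A i j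

/-- Sum of the entries of column `j`. -/
def colSum {m n : ℕ} (A : Matrix (Fin m) (Fin n) ℕ) (j : Fin n) : ℕ :=
  ∑ i, A i j

/-- The class `A(R,S)` of (0,1)-matrices with row sum vector `R` and
column sum vector `S`. -/
def classRS {m n : ℕ} (R : Fin m → ℕ) (S : Fin n → ℕ) :
    Set (Matrix (Fin m) (Fin n) ℕ) :=
  {A | ZeroOne A ∧ (∀ i, rowSum A i = R i) ∧ (∀ j, colSum A j = S j)}

/-- The class `A(n,k)` of square (0,1)-matrices of order `n` with all row
and column sums equal to `k`. -/
def classA (n k : ℕ) : Set (Matrix (Fin n) (Fin n) ℕ) :=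
  classRS (fun _ => k) (fun _ => k)

/-- `sigmaM A i j` is the sum of the entries of the leading submatrix of `A`
on rows `0,…,i` and columns `0,…,j` (0-based), i.e. `σ_{i+1,j+1}(A)` in
1-based notation. -/
def sigmaM {m n : ℕ} (A : Matrix (Fin m) (Fin n) ℕ) (i : Fin m) (j : Fin n) : ℕ :=
  ∑ k ∈ Finset.univ.filter (fun k : Fin m => k ≤ i),
    ∑ l ∈ Finset.univ.filter (fun l : Fin n => l ≤ j), A k l

/-- The Bruhat order: `A ⪯_B C` iff `σ_{ij}(A) ≥ σ_{ij}(C)` for all `i, j`. -/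
def brle {m n : ℕ} (A C : Matrix (Fin m) (Fin n) ℕ) : Prop :=
  ∀ i j, sigmaM C i j ≤ sigmaM A i j

/-- Incomparability in the Bruhat order. -/
def Incomp {m n : ℕ} (A C : Matrix (Fin m) (Fin n) ℕ) : Prop :=
  ¬ brle A C ∧ ¬ brle C A

/-- A set of matrices that is an antichain in the Bruhat order. -/
def IsAntichainB {m n : ℕ} (D : Set (Matrix (Fin m) (Fin n) ℕ)) : Prop :=
  ∀ A ∈ D, ∀ C ∈ D, A ≠ C → Incomp A C

/-- The number of inversions of a (0,1)-matrix: pairs of `1` entries, one of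
which is strictly to the top-right of the other (each unordered pair counted
once, via the representative whose first member is in the lower-indexed row). -/
def nu {m n : ℕ} (A : Matrix (Fin m) (Fin n) ℕ) : ℕ :=
  (Finset.univ.filter (fun p : (Fin m × Fin n) × (Fin m × Fin n) =>
      p.1.1 < p.2.1 ∧ p.2.2 < p.1.2 ∧ A p.1.1 p.1.2 = 1 ∧ A p.2.1 p.2.2 = 1)).card

/-- The conjugate of a matrix: columns in reversed (left-right flipped) order. -/
def conjM {m n : ℕ} (A : Matrix (Fin m) (Fin n) ℕ) : Matrix (Fin m) (Fin n) ℕ :=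
  Matrix.of fun i j => A i j.rev


/-! ### Auxiliary development -/

instance brle.dec {m n : ℕ} (A C : Matrix (Fin m) (Fin n) ℕ) : Decidable (brle A C) :=
  inferInstanceAs (Decidable (∀ i j, sigmaM C i j ≤ sigmaM A i j))

instance Incomp.dec {m n : ℕ} (A C : Matrix (Fin m) (Fin n) ℕ) : Decidable (Incomp A C) :=
  inferInstanceAs (Decidable (¬ _ ∧ ¬ _))

namespace Halfreg

open Finset

/-- entry of a matrix extended to `ℕ` indices by zero -/
def fe {M N : ℕ} (X : Matrix (Fin M) (Fin N) ℕ) (k l : ℕ) : ℕ :=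
  if h : k < M ∧ l < N then X ⟨k, h.1⟩ ⟨l, h.2⟩ else 0

lemma fe_lt {M N : ℕ} (X : Matrix (Fin M) (Fin N) ℕ) {k l : ℕ} (hk : k < M) (hl : l < N) :
    fe X k l = X ⟨k, hk⟩ ⟨l, hl⟩ := by simp [fe, hk, hl]

/-- `σ` with ℕ coordinates -/
def sigN {M N : ℕ} (X : Matrix (Fin M) (Fin N) ℕ) (s t : ℕ) : ℕ :=
  ∑ k ∈ range (s+1), ∑ l ∈ range (t+1), fe X k l

lemma filter_le_eq {N : ℕ} (i : Fin N) (F : Fin N → ℕ) :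
    ∑ k ∈ Finset.univ.filter (fun k : Fin N => k ≤ i), F k
      = ∑ k ∈ range (i.val+1), (if h : k < N then F ⟨k, h⟩ else 0) := by
  have h1 : ∑ k ∈ Finset.univ.filter (fun k : Fin N => k ≤ i), F k
      = ∑ k : Fin N, (if k ≤ i then F k else 0) := Finset.sum_filter _ _
  have h2 := Fin.sum_univ_eq_sum_range
    (fun k : ℕ => if h : k < N then (if k ≤ i.val then F ⟨k, h⟩ else 0) else 0) N
  have h3 : ∑ k : Fin N,
      (fun k : ℕ => if h : k < N then (if k ≤ i.val then F ⟨k, h⟩ else 0) else 0) k.val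
      = ∑ k : Fin N, (if k ≤ i then F k else 0) := by
    refine Finset.sum_congr rfl (fun k _ => ?_)
    simp only [k.isLt, dite_true, dif_pos, Fin.eta, Fin.le_def]
  have h4 : ∑ k ∈ range N,
      (fun k : ℕ => if h : k < N then (if k ≤ i.val then F ⟨k, h⟩ else 0) else 0) k
      = ∑ k ∈ range (i.val+1), (if h : k < N then F ⟨k, h⟩ else 0) := by
    rw [show (range (i.val+1)) = (range N).filter (fun k => k ≤ i.val) by
      ext k; simp only [mem_filter, mem_range]; omega, Finset.sum_filter]
    refine Finset.sum_congr rfl (fun k hk => ?_)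
    simp only [mem_range] at hk
    simp only [hk, dif_pos]
  rw [h1, ← h3, h2, h4]

lemma sigmaM_eq_sigN {M N : ℕ} (X : Matrix (Fin M) (Fin N) ℕ) (i : Fin M) (j : Fin N) :
    sigmaM X i j = sigN X i.val j.val := by
  unfold sigmaM sigN
  rw [filter_le_eq i (fun k => ∑ l ∈ Finset.univ.filter (fun l : Fin N => l ≤ j), X k l)]
  refine Finset.sum_congr rfl (fun k hk => ?_)
  simp only [mem_range] at hk
  have hkM : k < M := by omega
  rw [dif_pos hkM, filter_le_eq j (fun l => X ⟨k, hkM⟩ l)]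
  refine Finset.sum_congr rfl (fun l hl => ?_)
  simp only [mem_range] at hl
  have hlN : l < N := by omega
  rw [dif_pos hlN, fe_lt X hkM hlN]

lemma sum_range_mul' (h : ℕ → ℕ) (Q m : ℕ) :
    ∑ k ∈ range (Q*m), h k = ∑ q ∈ range Q, ∑ r ∈ range m, h (q*m+r) := by
  induction Q with
  | zero => simp
  | succ n ih =>
      rw [Nat.succ_mul, Finset.sum_range_add, ih, Finset.sum_range_succ]

lemma sum_range_block (h : ℕ → ℕ) (Q m R : ℕ) :
    ∑ k ∈ range (Q*m+R+1), h k
      = (∑ q ∈ range Q, ∑ r ∈ range m, h (q*m+r)) + ∑ r ∈ range (R+1), h (Q*m+r) := by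
  rw [show Q*m+R+1 = Q*m + (R+1) by omega, Finset.sum_range_add, sum_range_mul']

lemma divh {m q r : ℕ} (hm : 0 < m) (hr : r < m) : (q*m+r)/m = q := by
  rw [add_comm, Nat.add_mul_div_right _ _ hm, Nat.div_eq_of_lt hr, zero_add]

lemma modh {m q r : ℕ} (hr : r < m) : (q*m+r) % m = r := by
  rw [add_comm, Nat.add_mul_mod_self_right, Nat.mod_eq_of_lt hr]

end Halfreg

namespace Halfreg
open Finset

variable {a m : ℕ}

/-- the big matrix built from an `a×a` grid of `m×m` blocks -/
def mkM (a m : ℕ) (G : ℕ → ℕ → Matrix (Fin m) (Fin m) ℕ) :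
    Matrix (Fin (a*m)) (Fin (a*m)) ℕ :=
  Matrix.of fun i j => fe (G (i.val / m) (j.val / m)) (i.val % m) (j.val % m)

def TotN {m : ℕ} (X : Matrix (Fin m) (Fin m) ℕ) : ℕ :=
  ∑ r ∈ range m, ∑ r' ∈ range m, fe X r r'

def CpN {m : ℕ} (X : Matrix (Fin m) (Fin m) ℕ) (t : ℕ) : ℕ :=
  ∑ r ∈ range m, ∑ r' ∈ range (t+1), fe X r r'

def RpN {m : ℕ} (X : Matrix (Fin m) (Fin m) ℕ) (s : ℕ) : ℕ :=
  ∑ r ∈ range (s+1), ∑ r' ∈ range m, fe X r r'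

lemma quot_lt (hm : 0 < m) {Q R : ℕ} (hR : R < m) (h : Q*m+R < a*m) : Q < a := by
  by_contra hc
  push_neg at hc
  have : a*m ≤ Q*m := Nat.mul_le_mul_right m hc
  omega

lemma cell_lt {q r : ℕ} (hq : q < a) (hr : r < m) : q*m+r < a*m :=
  calc q*m+r < q*m+m := by omega
    _ = (q+1)*m := by ring
    _ ≤ a*m := Nat.mul_le_mul_right m (by omega)

lemma master' (hm : 0 < m) (G : ℕ → ℕ → Matrix (Fin m) (Fin m) ℕ)
    {Qi Ri Qj Rj : ℕ} (hRi : Ri < m) (hRj : Rj < m)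
    (hia : Qi*m+Ri < a*m) (hja : Qj*m+Rj < a*m) :
    sigmaM (mkM a m G) ⟨Qi*m+Ri, hia⟩ ⟨Qj*m+Rj, hja⟩
      = (∑ q ∈ range Qi, ∑ q' ∈ range Qj, TotN (G q q'))
        + (∑ q ∈ range Qi, CpN (G q Qj) Rj)
        + (∑ q' ∈ range Qj, RpN (G Qi q') Ri)
        + sigN (G Qi Qj) Ri Rj := by
  have hQia : Qi < a := quot_lt hm hRi hia
  rw [sigmaM_eq_sigN]
  show ∑ k ∈ range (Qi*m+Ri+1), ∑ l ∈ range (Qj*m+Rj+1), fe (mkM a m G) k l = _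
  have hstep : ∀ k < a*m, ∑ l ∈ range (Qj*m+Rj+1), fe (mkM a m G) k l
      = (∑ q' ∈ range Qj, ∑ r' ∈ range m, fe (G (k/m) q') (k%m) r')
        + ∑ r' ∈ range (Rj+1), fe (G (k/m) Qj) (k%m) r' := by
    intro k hk
    calc ∑ l ∈ range (Qj*m+Rj+1), fe (mkM a m G) k l
        = ∑ l ∈ range (Qj*m+Rj+1), fe (G (k/m) (l/m)) (k%m) (l%m) := by
          refine Finset.sum_congr rfl (fun l hl => ?_)
          simp only [mem_range] at hl
          have hl' : l < a*m := by omega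
          rw [fe_lt _ hk hl']
          rfl
      _ = _ := by
          rw [sum_range_block (fun l => fe (G (k/m) (l/m)) (k%m) (l%m)) Qj m Rj]
          congr 1
          · refine Finset.sum_congr rfl (fun q' hq' => Finset.sum_congr rfl (fun r' hr' => ?_))
            simp only [mem_range] at hr'
            rw [divh hm hr', modh hr']
          · refine Finset.sum_congr rfl (fun r' hr' => ?_)
            simp only [mem_range] at hr'
            have hr'' : r' < m := by omega
            rw [divh hm hr'', modh hr'']
  rw [sum_range_block (fun k => ∑ l ∈ range (Qj*m+Rj+1), fe (mkM a m G) k l) Qi m Ri]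
  have hb1 : ∀ q ∈ range Qi, (∑ r ∈ range m,
      ∑ l ∈ range (Qj*m+Rj+1), fe (mkM a m G) (q*m+r) l)
        = ∑ r ∈ range m, ((∑ q' ∈ range Qj, ∑ r' ∈ range m, fe (G q q') r r')
          + ∑ r' ∈ range (Rj+1), fe (G q Qj) r r') := by
    intro q hq
    simp only [mem_range] at hq
    refine Finset.sum_congr rfl (fun r hr => ?_)
    simp only [mem_range] at hr
    rw [hstep _ (cell_lt (by omega) hr), divh hm hr, modh hr]
  have hb2 : ∀ r ∈ range (Ri+1),
      (∑ l ∈ range (Qj*m+Rj+1), fe (mkM a m G) (Qi*m+r) l)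
        = (∑ q' ∈ range Qj, ∑ r' ∈ range m, fe (G Qi q') r r')
          + ∑ r' ∈ range (Rj+1), fe (G Qi Qj) r r' := by
    intro r hr
    simp only [mem_range] at hr
    have hrm : r < m := by omega
    rw [hstep _ (cell_lt hQia hrm), divh hm hrm, modh hrm]
  rw [Finset.sum_congr rfl hb1, Finset.sum_congr rfl hb2]
  simp only [Finset.sum_add_distrib]
  have hc1 : ∑ q ∈ range Qi, ∑ r ∈ range m, ∑ q' ∈ range Qj, ∑ r' ∈ range m, fe (G q q') r r'
      = ∑ q ∈ range Qi, ∑ q' ∈ range Qj, ∑ r ∈ range m, ∑ r' ∈ range m, fe (G q q') r r' :=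
    Finset.sum_congr rfl (fun q _ => Finset.sum_comm)
  have hc2 : ∑ r ∈ range (Ri+1), ∑ q' ∈ range Qj, ∑ r' ∈ range m, fe (G Qi q') r r'
      = ∑ q' ∈ range Qj, ∑ r ∈ range (Ri+1), ∑ r' ∈ range m, fe (G Qi q') r r' :=
    Finset.sum_comm
  rw [hc1, hc2]
  simp only [TotN, CpN, RpN, sigN]
  omega

end Halfreg

namespace Halfreg
open Finset

variable {a m : ℕ}

lemma rowfe {X : Matrix (Fin m) (Fin m) ℕ} {r : ℕ} (hr : r < m) :
    ∑ r' ∈ range m, fe X r r' = rowSum X ⟨r, hr⟩ := by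
  rw [rowSum, ← Fin.sum_univ_eq_sum_range (fun l => fe X r l) m]
  refine Finset.sum_congr rfl (fun l _ => ?_)
  rw [fe_lt X hr l.isLt]

lemma colfe {X : Matrix (Fin m) (Fin m) ℕ} {r' : ℕ} (hr' : r' < m) :
    ∑ r ∈ range m, fe X r r' = colSum X ⟨r', hr'⟩ := by
  rw [colSum, ← Fin.sum_univ_eq_sum_range (fun k => fe X k r') m]
  refine Finset.sum_congr rfl (fun k _ => ?_)
  rw [fe_lt X k.isLt hr']

lemma TotN_class {X : Matrix (Fin m) (Fin m) ℕ} {k : ℕ} (hX : X ∈ classA m k) :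
    TotN X = k * m := by
  unfold TotN
  have h : ∀ r ∈ range m, ∑ r' ∈ range m, fe X r r' = k := by
    intro r hr
    rw [rowfe (mem_range.mp hr)]
    exact hX.2.1 _
  rw [Finset.sum_congr rfl h]
  simp [mul_comm]

lemma CpN_class {X : Matrix (Fin m) (Fin m) ℕ} {k t : ℕ} (hX : X ∈ classA m k)
    (ht : t < m) : CpN X t = k * (t+1) := by
  unfold CpN
  rw [Finset.sum_comm]
  have h : ∀ r' ∈ range (t+1), ∑ r ∈ range m, fe X r r' = k := by
    intro r' hr'
    simp only [mem_range] at hr'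
    rw [colfe (show r' < m by omega)]
    exact hX.2.2 _
  rw [Finset.sum_congr rfl h]
  simp [mul_comm]

lemma RpN_class {X : Matrix (Fin m) (Fin m) ℕ} {k s : ℕ} (hX : X ∈ classA m k)
    (hs : s < m) : RpN X s = k * (s+1) := by
  unfold RpN
  have h : ∀ r ∈ range (s+1), ∑ r' ∈ range m, fe X r r' = k := by
    intro r hr
    simp only [mem_range] at hr
    rw [rowfe (show r < m by omega)]
    exact hX.2.1 _
  rw [Finset.sum_congr rfl h]
  simp [mul_comm]

lemma sigN_corner {X : Matrix (Fin m) (Fin m) ℕ} (hm : 0 < m) :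
    sigN X (m-1) (m-1) = TotN X := by
  unfold sigN TotN
  rw [show m-1+1 = m by omega]

lemma fe_le_one {X : Matrix (Fin m) (Fin m) ℕ} (hz : ZeroOne X) (k l : ℕ) :
    fe X k l ≤ 1 := by
  unfold fe
  split
  · next h => rcases hz ⟨k, h.1⟩ ⟨l, h.2⟩ with h1 | h1 <;> omega
  · omega

lemma sigN_le {X : Matrix (Fin m) (Fin m) ℕ} (hz : ZeroOne X) (s t : ℕ) :
    sigN X s t ≤ (s+1) * (t+1) := by
  unfold sigN
  calc ∑ k ∈ range (s+1), ∑ l ∈ range (t+1), fe X k l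
      ≤ ∑ _k ∈ range (s+1), ∑ _l ∈ range (t+1), 1 :=
        Finset.sum_le_sum (fun k _ => Finset.sum_le_sum (fun l _ => fe_le_one hz k l))
    _ = (s+1) * (t+1) := by simp [mul_comm]

/-- complement of a 0-1 matrix -/
def complM {m : ℕ} (X : Matrix (Fin m) (Fin m) ℕ) : Matrix (Fin m) (Fin m) ℕ :=
  Matrix.of fun i j => 1 - X i j

lemma complM_class {X : Matrix (Fin m) (Fin m) ℕ} {k : ℕ}
    (hX : X ∈ classA m k) : complM X ∈ classA m (m - k) := by
  obtain ⟨hz, hr, hc⟩ := hX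
  refine ⟨fun i j => ?_, fun i => ?_, fun j => ?_⟩
  · rcases hz i j with h | h <;> simp [complM, h]
  · show rowSum (complM X) i = m - k
    have h1 : rowSum (complM X) i + rowSum X i = m := by
      rw [rowSum, rowSum, ← Finset.sum_add_distrib]
      have hh : ∀ j : Fin m, complM X i j + X i j = 1 := fun j => by
        rcases hz i j with h | h <;> simp [complM, h]
      rw [Finset.sum_congr rfl (fun j _ => hh j)]
      simp
    have h2 : rowSum X i = k := hr i
    omega
  · show colSum (complM X) j = m - k
    have h1 : colSum (complM X) j + colSum X j = m := by
      rw [colSum, colSum, ← Finset.sum_add_distrib]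
      have hh : ∀ i : Fin m, complM X i j + X i j = 1 := fun i => by
        rcases hz i j with h | h <;> simp [complM, h]
      rw [Finset.sum_congr rfl (fun i _ => hh i)]
      simp
    have h2 : colSum X j = k := hc j
    omega

lemma sigN_compl {X : Matrix (Fin m) (Fin m) ℕ} (hz : ZeroOne X) {s t : ℕ}
    (hs : s < m) (ht : t < m) :
    sigN (complM X) s t + sigN X s t = (s+1) * (t+1) := by
  unfold sigN
  rw [← Finset.sum_add_distrib]
  have h1 : ∀ k ∈ range (s+1), (∑ l ∈ range (t+1), fe (complM X) k l)
      + ∑ l ∈ range (t+1), fe X k l = ∑ _l ∈ range (t+1), 1 := by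
    intro k hk
    simp only [mem_range] at hk
    rw [← Finset.sum_add_distrib]
    refine Finset.sum_congr rfl (fun l hl => ?_)
    simp only [mem_range] at hl
    have hkm : k < m := by omega
    have hlm : l < m := by omega
    rw [fe_lt _ hkm hlm, fe_lt _ hkm hlm]
    rcases hz ⟨k, hkm⟩ ⟨l, hlm⟩ with h | h <;> simp [complM, h]
  rw [Finset.sum_congr rfl h1]
  simp [mul_comm]

/-- Incomparability is preserved by complement -/
lemma incomp_compl {X Y : Matrix (Fin m) (Fin m) ℕ} (hzX : ZeroOne X) (hzY : ZeroOne Y)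
    (h : Incomp X Y) : Incomp (complM X) (complM Y) := by
  obtain ⟨h1, h2⟩ := h
  rw [brle] at h1 h2
  push_neg at h1 h2
  obtain ⟨i1, j1, hp1⟩ := h1
  obtain ⟨i2, j2, hp2⟩ := h2
  constructor
  · intro hb
    have hq := hb i2 j2
    simp only [sigmaM_eq_sigN] at hq hp2
    have e1 := sigN_compl hzX (s := i2.val) (t := j2.val) i2.isLt j2.isLt
    have e2 := sigN_compl hzY (s := i2.val) (t := j2.val) i2.isLt j2.isLt
    omega
  · intro hb
    have hq := hb i1 j1
    simp only [sigmaM_eq_sigN] at hq hp1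
    have e1 := sigN_compl hzX (s := i1.val) (t := j1.val) i1.isLt j1.isLt
    have e2 := sigN_compl hzY (s := i1.val) (t := j1.val) i1.isLt j1.isLt
    omega

end Halfreg

namespace Halfreg
open Finset

variable {a m : ℕ}

def pinF (p : Fin a) (s : Fin m) : Fin (a*m) :=
  ⟨p.val*m + s.val, cell_lt p.isLt s.isLt⟩

/-- the grid of blocks determined by `A`, `B` and the two encodings -/
def GofN (a m : ℕ) (g1 g0 : Matrix (Fin m) (Fin m) ℕ → Matrix (Fin m) (Fin m) ℕ)
    (A : Matrix (Fin a) (Fin a) ℕ) (B : Fin a × Fin a → Matrix (Fin m) (Fin m) ℕ) :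
    ℕ → ℕ → Matrix (Fin m) (Fin m) ℕ :=
  fun p q => if h : p < a ∧ q < a then
      (if A ⟨p, h.1⟩ ⟨q, h.2⟩ = 1 then g1 (B (⟨p, h.1⟩, ⟨q, h.2⟩)) else g0 (B (⟨p, h.1⟩, ⟨q, h.2⟩)))
    else 0

def bigM (a m : ℕ) (g1 g0 : Matrix (Fin m) (Fin m) ℕ → Matrix (Fin m) (Fin m) ℕ)
    (A : Matrix (Fin a) (Fin a) ℕ) (B : Fin a × Fin a → Matrix (Fin m) (Fin m) ℕ) :
    Matrix (Fin (a*m)) (Fin (a*m)) ℕ :=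
  mkM a m (GofN a m g1 g0 A B)

lemma GofN_lt {g1 g0} {A : Matrix (Fin a) (Fin a) ℕ} {B} {p q : ℕ} (hp : p < a) (hq : q < a) :
    GofN a m g1 g0 A B p q
      = if A ⟨p, hp⟩ ⟨q, hq⟩ = 1 then g1 (B (⟨p, hp⟩, ⟨q, hq⟩)) else g0 (B (⟨p, hp⟩, ⟨q, hq⟩)) := by
  rw [GofN, dif_pos ⟨hp, hq⟩]

lemma GofN_fin {g1 g0} {A : Matrix (Fin a) (Fin a) ℕ} {B} (p q : Fin a) :
    GofN a m g1 g0 A B p.val q.val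
      = if A p q = 1 then g1 (B (p, q)) else g0 (B (p, q)) := by
  rw [GofN_lt p.isLt q.isLt]

/-- class membership of the blocks, given the weights -/
lemma GofN_class {g1 g0 : Matrix (Fin m) (Fin m) ℕ → Matrix (Fin m) (Fin m) ℕ}
    {A : Matrix (Fin a) (Fin a) ℕ} {B : Fin a × Fin a → Matrix (Fin m) (Fin m) ℕ}
    {D₂ : Set (Matrix (Fin m) (Fin m) ℕ)} {k1 k0 : ℕ}
    (hD₂ : D₂ ⊆ classA m 2)
    (hg1 : ∀ X ∈ classA m 2, g1 X ∈ classA m k1)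
    (hg0 : ∀ X ∈ classA m 2, g0 X ∈ classA m k0)
    (hB : ∀ pq, B pq ∈ D₂) {p q : ℕ} (hp : p < a) (hq : q < a) :
    GofN a m g1 g0 A B p q ∈ classA m (if fe A p q = 1 then k1 else k0) := by
  rw [GofN_lt hp hq, fe_lt _ hp hq]
  split
  · exact hg1 _ (hD₂ (hB _))
  · exact hg0 _ (hD₂ (hB _))

/-- the value of `sigmaM` of the big matrix differs from a same-weight companion
by the (local) `sigN` of the current block -/
lemma sigma_sub_const {G G' : ℕ → ℕ → Matrix (Fin m) (Fin m) ℕ} {w : ℕ → ℕ → ℕ}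
    (hm : 0 < m)
    (hG : ∀ p q, p < a → q < a → G p q ∈ classA m (w p q))
    (hG' : ∀ p q, p < a → q < a → G' p q ∈ classA m (w p q))
    {Qi Ri Qj Rj : ℕ} (hRi : Ri < m) (hRj : Rj < m)
    (hia : Qi*m+Ri < a*m) (hja : Qj*m+Rj < a*m) :
    sigmaM (mkM a m G) ⟨Qi*m+Ri, hia⟩ ⟨Qj*m+Rj, hja⟩ + sigN (G' Qi Qj) Ri Rj
      = sigmaM (mkM a m G') ⟨Qi*m+Ri, hia⟩ ⟨Qj*m+Rj, hja⟩ + sigN (G Qi Qj) Ri Rj := by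
  have hQia : Qi < a := quot_lt hm hRi hia
  have hQja : Qj < a := quot_lt hm hRj hja
  rw [master' hm G hRi hRj hia hja, master' hm G' hRi hRj hia hja]
  have e1 : ∀ q ∈ range Qi, ∀ q' ∈ range Qj, TotN (G q q') = TotN (G' q q') := by
    intro q hq q' hq'
    simp only [mem_range] at hq hq'
    rw [TotN_class (hG q q' (by omega) (by omega)), TotN_class (hG' q q' (by omega) (by omega))]
  have e2 : ∀ q ∈ range Qi, CpN (G q Qj) Rj = CpN (G' q Qj) Rj := by
    intro q hq
    simp only [mem_range] at hq
    rw [CpN_class (hG q Qj (by omega) hQja) hRj, CpN_class (hG' q Qj (by omega) hQja) hRj]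
  have e3 : ∀ q' ∈ range Qj, RpN (G Qi q') Ri = RpN (G' Qi q') Ri := by
    intro q' hq'
    simp only [mem_range] at hq'
    rw [RpN_class (hG Qi q' hQia (by omega)) hRi, RpN_class (hG' Qi q' hQia (by omega)) hRi]
  rw [Finset.sum_congr rfl (fun q hq => Finset.sum_congr rfl (fun q' hq' => e1 q hq q' hq')),
      Finset.sum_congr rfl e2, Finset.sum_congr rfl e3]
  omega

/-- corner value of `sigmaM` of the big matrix -/
lemma corner_val {G : ℕ → ℕ → Matrix (Fin m) (Fin m) ℕ} {w : ℕ → ℕ → ℕ}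
    (hm : 0 < m)
    (hG : ∀ p q, p < a → q < a → G p q ∈ classA m (w p q))
    (p q : Fin a) :
    sigmaM (mkM a m G) (pinF p ⟨m-1, by omega⟩) (pinF q ⟨m-1, by omega⟩)
      = m * (∑ k ∈ range (p.val+1), ∑ l ∈ range (q.val+1), w k l) := by
  show sigmaM (mkM a m G) ⟨p.val*m+(m-1), _⟩ ⟨q.val*m+(m-1), _⟩ = _
  rw [master' hm G (by omega) (by omega)]
  have e1 : ∀ k ∈ range p.val, ∀ l ∈ range q.val, TotN (G k l) = w k l * m := by
    intro k hk l hl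
    simp only [mem_range] at hk hl
    have hpa := p.isLt
    have hqa := q.isLt
    exact TotN_class (hG k l (by omega) (by omega))
  have e2 : ∀ k ∈ range p.val, CpN (G k q.val) (m-1) = w k q.val * m := by
    intro k hk
    simp only [mem_range] at hk
    have hpa := p.isLt
    rw [CpN_class (hG k q.val (by omega) q.isLt) (by omega), show m-1+1 = m by omega]
  have e3 : ∀ l ∈ range q.val, RpN (G p.val l) (m-1) = w p.val l * m := by
    intro l hl
    simp only [mem_range] at hl
    have hqa := q.isLt
    rw [RpN_class (hG p.val l p.isLt (by omega)) (by omega), show m-1+1 = m by omega]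
  have e4 : sigN (G p.val q.val) (m-1) (m-1) = w p.val q.val * m := by
    rw [sigN_corner hm, TotN_class (hG p.val q.val p.isLt q.isLt)]
  rw [Finset.sum_congr rfl (fun k hk => Finset.sum_congr rfl (fun l hl => e1 k hk l hl)),
      Finset.sum_congr rfl e2, Finset.sum_congr rfl e3, e4]
  rw [Finset.sum_range_succ (fun k => ∑ l ∈ range (q.val+1), w k l) p.val,
      Finset.sum_range_succ (fun l => w p.val l) q.val]
  have e5 : ∀ k ∈ range p.val, ∑ l ∈ range (q.val+1), w k l
      = (∑ l ∈ range q.val, w k l) + w k q.val := fun k _ => Finset.sum_range_succ _ _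
  rw [Finset.sum_congr rfl e5]
  simp only [Finset.sum_add_distrib, mul_add, ← Finset.sum_mul]
  ring

end Halfreg

namespace Halfreg
open Finset

variable {a m : ℕ}

lemma nat_le_one_cases {x : ℕ} (h : x ≤ 1) : x = 0 ∨ x = 1 := by omega

lemma wsum1 (g : ℕ → ℕ) (n c1 c0 : ℕ) (hz : ∀ x, g x ≤ 1) :
    ∑ x ∈ range n, (if g x = 1 then c1 else c0)
      = c1 * (∑ x ∈ range n, g x) + c0 * (n - ∑ x ∈ range n, g x) := by
  have hle : ∑ x ∈ range n, g x ≤ n := by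
    calc ∑ x ∈ range n, g x ≤ ∑ _x ∈ range n, 1 := Finset.sum_le_sum (fun x _ => hz x)
      _ = n := by simp
  have h1 : ∀ x ∈ range n, (if g x = 1 then c1 else c0) = c1 * g x + c0 * (1 - g x) := by
    intro x _
    rcases nat_le_one_cases (hz x) with h | h <;> simp [h]
  rw [Finset.sum_congr rfl h1, Finset.sum_add_distrib, ← Finset.mul_sum, ← Finset.mul_sum]
  have h2 : ∑ x ∈ range n, (1 - g x) = n - ∑ x ∈ range n, g x := by
    have h3 : (∑ x ∈ range n, (1 - g x)) + ∑ x ∈ range n, g x = n := by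
      rw [← Finset.sum_add_distrib]
      have h4 : ∀ x ∈ range n, 1 - g x + g x = 1 := by
        intro x _
        rcases nat_le_one_cases (hz x) with h | h <;> simp [h]
      rw [Finset.sum_congr rfl h4]
      simp
    omega
  rw [h2]

lemma wsum2 (g : ℕ → ℕ → ℕ) (K L c1 c0 : ℕ) (hz : ∀ x y, g x y ≤ 1) :
    ∑ x ∈ range K, ∑ y ∈ range L, (if g x y = 1 then c1 else c0)
      = c1 * (∑ x ∈ range K, ∑ y ∈ range L, g x y)
        + c0 * (K * L - ∑ x ∈ range K, ∑ y ∈ range L, g x y) := by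
  have hrow : ∀ x ∈ range K, ∑ y ∈ range L, (if g x y = 1 then c1 else c0)
      = c1 * (∑ y ∈ range L, g x y) + c0 * (L - ∑ y ∈ range L, g x y) :=
    fun x _ => wsum1 (g x) L c1 c0 (hz x)
  have hrle : ∀ x, ∑ y ∈ range L, g x y ≤ L := by
    intro x
    calc ∑ y ∈ range L, g x y ≤ ∑ _y ∈ range L, 1 := Finset.sum_le_sum (fun y _ => hz x y)
      _ = L := by simp
  have htle : ∑ x ∈ range K, ∑ y ∈ range L, g x y ≤ K * L := by
    calc ∑ x ∈ range K, ∑ y ∈ range L, g x y ≤ ∑ _x ∈ range K, L :=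
        Finset.sum_le_sum (fun x _ => hrle x)
      _ = K * L := by simp [mul_comm]
  rw [Finset.sum_congr rfl hrow, Finset.sum_add_distrib, ← Finset.mul_sum, ← Finset.mul_sum]
  have h2 : ∑ x ∈ range K, (L - ∑ y ∈ range L, g x y)
      = K * L - ∑ x ∈ range K, ∑ y ∈ range L, g x y := by
    have h3 : (∑ x ∈ range K, (L - ∑ y ∈ range L, g x y))
        + ∑ x ∈ range K, ∑ y ∈ range L, g x y = K * L := by
      rw [← Finset.sum_add_distrib]
      have h4 : ∀ x ∈ range K, (L - ∑ y ∈ range L, g x y) + ∑ y ∈ range L, g x y = L := by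
        intro x _
        have := hrle x
        omega
      rw [Finset.sum_congr rfl h4]
      simp [mul_comm]
    omega
  rw [h2]

lemma fin_div_lt (hm : 0 < m) (i : Fin (a*m)) : i.val / m < a := by
  have h1 := i.isLt
  have h3 := Nat.mod_add_div i.val m
  by_contra hc
  push_neg at hc
  have h4 : a*m ≤ (i.val/m)*m := Nat.mul_le_mul_right m hc
  have h5 : (i.val/m)*m = m*(i.val/m) := mul_comm _ _
  omega

/-- row sums of the big matrix -/
lemma bigM_class {g1 g0 : Matrix (Fin m) (Fin m) ℕ → Matrix (Fin m) (Fin m) ℕ}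
    {A : Matrix (Fin a) (Fin a) ℕ} {B : Fin a × Fin a → Matrix (Fin m) (Fin m) ℕ}
    {D₂ : Set (Matrix (Fin m) (Fin m) ℕ)} {k1 k0 : ℕ}
    (hm : 0 < m) (hae : Even a)
    (hD₂ : D₂ ⊆ classA m 2)
    (hg1 : ∀ X ∈ classA m 2, g1 X ∈ classA m k1)
    (hg0 : ∀ X ∈ classA m 2, g0 X ∈ classA m k0)
    (hk : k1 + k0 = m)
    (hA : A ∈ classA a (a/2)) (hB : ∀ pq, B pq ∈ D₂) :
    bigM a m g1 g0 A B ∈ classA (a*m) ((a*m)/2) := by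
  obtain ⟨hAz, hAr, hAc⟩ := hA
  obtain ⟨t, hat⟩ := hae
  have hgcl : ∀ p q, p < a → q < a →
      GofN a m g1 g0 A B p q ∈ classA m (if fe A p q = 1 then k1 else k0) :=
    fun p q hp hq => GofN_class hD₂ hg1 hg0 hB hp hq
  have hAz' : ∀ p q, fe A p q ≤ 1 := fe_le_one hAz
  refine ⟨fun i j => ?_, fun i => ?_, fun j => ?_⟩
  · -- zero-one entries
    have hdi : i.val/m < a := fin_div_lt hm i
    have hdj : j.val/m < a := fin_div_lt hm j
    have him : i.val % m < m := Nat.mod_lt _ hm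
    have hjm : j.val % m < m := Nat.mod_lt _ hm
    have hcl := hgcl _ _ hdi hdj
    have hrw : bigM a m g1 g0 A B i j
        = GofN a m g1 g0 A B (i.val/m) (j.val/m) ⟨i.val%m, him⟩ ⟨j.val%m, hjm⟩ :=
      fe_lt _ him hjm
    rw [hrw]
    exact hcl.1 _ _
  · -- row sums
    show rowSum (mkM a m (GofN a m g1 g0 A B)) i = (a*m)/2
    have hdi : i.val/m < a := fin_div_lt hm _
    have him : i.val % m < m := Nat.mod_lt _ hm
    rw [rowSum]
    simp only [mkM, Matrix.of_apply]
    rw [Fin.sum_univ_eq_sum_range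
      (fun l => fe (GofN a m g1 g0 A B (i.val/m) (l/m)) (i.val%m) (l%m)) (a*m)]
    rw [sum_range_mul' _ a m]
    have h1 : ∀ q' ∈ range a, ∑ r' ∈ range m,
        fe (GofN a m g1 g0 A B (i.val/m) ((q'*m+r')/m)) (i.val%m) ((q'*m+r')%m)
          = (if fe A (i.val/m) q' = 1 then k1 else k0) := by
      intro q' hq'
      simp only [mem_range] at hq'
      have h2 : ∀ r' ∈ range m, fe (GofN a m g1 g0 A B (i.val/m) ((q'*m+r')/m))
          (i.val%m) ((q'*m+r')%m)
            = fe (GofN a m g1 g0 A B (i.val/m) q') (i.val%m) r' := by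
        intro r' hr'
        simp only [mem_range] at hr'
        rw [divh hm hr', modh hr']
      rw [Finset.sum_congr rfl h2, rowfe him]
      exact (hgcl _ _ hdi hq').2.1 _
    rw [Finset.sum_congr rfl h1]
    have hfs : ∑ x ∈ range a, fe A (i.val/m) x = a/2 := by
      rw [rowfe hdi]
      exact hAr _
    rw [wsum1 (fe A (i.val/m)) a k1 k0 (hAz' _), hfs]
    have ht1 : a/2 = t := by omega
    rw [ht1]
    have ht2 : a - t = t := by omega
    rw [ht2, hat, show (t+t)*m = (t*m)*2 by ring, Nat.mul_div_cancel _ (by norm_num)]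
    nlinarith [hk]
  · -- column sums
    show colSum (mkM a m (GofN a m g1 g0 A B)) j = (a*m)/2
    have hdj : j.val/m < a := fin_div_lt hm _
    have hjm : j.val % m < m := Nat.mod_lt _ hm
    rw [colSum]
    simp only [mkM, Matrix.of_apply]
    rw [Fin.sum_univ_eq_sum_range
      (fun k => fe (GofN a m g1 g0 A B (k/m) (j.val/m)) (k%m) (j.val%m)) (a*m)]
    rw [sum_range_mul' _ a m]
    have h1 : ∀ q ∈ range a, ∑ r ∈ range m,
        fe (GofN a m g1 g0 A B ((q*m+r)/m) (j.val/m)) ((q*m+r)%m) (j.val%m)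
          = (if fe A q (j.val/m) = 1 then k1 else k0) := by
      intro q hq
      simp only [mem_range] at hq
      have h2 : ∀ r ∈ range m, fe (GofN a m g1 g0 A B ((q*m+r)/m) (j.val/m))
          ((q*m+r)%m) (j.val%m)
            = fe (GofN a m g1 g0 A B q (j.val/m)) r (j.val%m) := by
        intro r hr
        simp only [mem_range] at hr
        rw [divh hm hr, modh hr]
      rw [Finset.sum_congr rfl h2, colfe hjm]
      exact (hgcl _ _ hq hdj).2.2 _
    rw [Finset.sum_congr rfl h1]
    have hfs : ∑ x ∈ range a, fe A x (j.val/m) = a/2 := by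
      rw [colfe hdj]
      exact hAc _
    rw [wsum1 (fun x => fe A x (j.val/m)) a k1 k0 (fun x => hAz' _ _), hfs]
    have ht1 : a/2 = t := by omega
    rw [ht1]
    have ht2 : a - t = t := by omega
    rw [ht2, hat, show (t+t)*m = (t*m)*2 by ring, Nat.mul_div_cancel _ (by norm_num)]
    nlinarith [hk]

end Halfreg

namespace Halfreg
open Finset

variable {a m : ℕ}

lemma not_brle_iff {M N : ℕ} (X Y : Matrix (Fin M) (Fin N) ℕ) :
    ¬ brle X Y ↔ ∃ i j, sigmaM X i j < sigmaM Y i j := by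
  rw [brle]
  push_neg
  rfl

lemma pinF_val (p : Fin a) (s : Fin m) : (pinF p s).val = p.val*m+s.val := rfl

/-- transfer of a strict `σ` inequality from a block to the big matrix -/
lemma not_brle_mk {G G' : ℕ → ℕ → Matrix (Fin m) (Fin m) ℕ} {w : ℕ → ℕ → ℕ}
    (hm : 0 < m)
    (hG : ∀ p q, p < a → q < a → G p q ∈ classA m (w p q))
    (hG' : ∀ p q, p < a → q < a → G' p q ∈ classA m (w p q))
    (p q : Fin a)
    (hpt : ¬ brle (G p.val q.val) (G' p.val q.val)) :
    ¬ brle (mkM a m G) (mkM a m G') := by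
  rw [not_brle_iff] at hpt
  obtain ⟨s, t, hst⟩ := hpt
  rw [not_brle_iff]
  refine ⟨pinF p s, pinF q t, ?_⟩
  have key := sigma_sub_const (a := a) hm hG hG' s.isLt t.isLt
    (cell_lt p.isLt s.isLt) (cell_lt q.isLt t.isLt)
  rw [sigmaM_eq_sigN, sigmaM_eq_sigN] at hst
  show sigmaM (mkM a m G) ⟨p.val*m+s.val, _⟩ ⟨q.val*m+t.val, _⟩
    < sigmaM (mkM a m G') ⟨p.val*m+s.val, _⟩ ⟨q.val*m+t.val, _⟩
  omega

/-- same-weights block incomparability transfers to the big matrices -/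
lemma incomp_mk_of_block {G G' : ℕ → ℕ → Matrix (Fin m) (Fin m) ℕ} {w : ℕ → ℕ → ℕ}
    (hm : 0 < m)
    (hG : ∀ p q, p < a → q < a → G p q ∈ classA m (w p q))
    (hG' : ∀ p q, p < a → q < a → G' p q ∈ classA m (w p q))
    {p1 q1 p2 q2 : Fin a}
    (h1 : ¬ brle (G p1.val q1.val) (G' p1.val q1.val))
    (h2 : ¬ brle (G' p2.val q2.val) (G p2.val q2.val)) :
    Incomp (mkM a m G) (mkM a m G') :=
  ⟨not_brle_mk hm hG hG' p1 q1 h1,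
   not_brle_mk hm hG' hG p2 q2 h2⟩

lemma Vlt_small {m x y pts : ℕ} (hm : m = 2 ∨ m = 3) (hx : x < y) (hy : y ≤ pts) :
    2*x+(m-2)*(pts-x) < 2*y+(m-2)*(pts-y) := by
  rcases hm with h | h <;> subst h <;> simp <;> omega

lemma Vlt_big {m x y pts : ℕ} (hm : 5 ≤ m) (hx : x < y) (hy : y ≤ pts) :
    2*y+(m-2)*(pts-y) < 2*x+(m-2)*(pts-x) := by
  have h1 : pts - x = (pts-y) + (y-x) := by omega
  rw [h1, Nat.mul_add]
  have h2 : 3*(y-x) ≤ (m-2)*(y-x) := Nat.mul_le_mul_right _ (by omega)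
  omega

/-- corner formula specialised to the weights coming from `A` -/
lemma corner_A {G : ℕ → ℕ → Matrix (Fin m) (Fin m) ℕ}
    {A : Matrix (Fin a) (Fin a) ℕ} (hm : 0 < m) (hAz : ZeroOne A)
    (hG : ∀ p q, p < a → q < a → G p q ∈ classA m (if fe A p q = 1 then 2 else m-2))
    (i j : Fin a) :
    sigmaM (mkM a m G) (pinF i ⟨m-1, by omega⟩) (pinF j ⟨m-1, by omega⟩)
      = m * (2 * sigN A i.val j.val
          + (m-2) * ((i.val+1) * (j.val+1) - sigN A i.val j.val)) := by
  rw [corner_val hm hG i j]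
  rw [wsum2 (fe A) (i.val+1) (j.val+1) 2 (m-2) (fe_le_one hAz)]
  rfl

end Halfreg

namespace Halfreg
open Finset

variable {a m : ℕ}

lemma exists_flip {f g : Fin a → ℕ} (hzf : ∀ j, f j = 0 ∨ f j = 1)
    (hzg : ∀ j, g j = 0 ∨ g j = 1) (hs : ∑ j, f j = ∑ j, g j) (hne : f ≠ g) :
    (∃ j, f j = 1 ∧ g j = 0) ∧ (∃ j, f j = 0 ∧ g j = 1) := by
  constructor
  · by_contra h
    push_neg at h
    have hle : ∀ j ∈ Finset.univ, f j ≤ g j := by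
      intro j _
      rcases hzf j with h1 | h1 <;> rcases hzg j with h2 | h2 <;> first
        | omega
        | exact absurd h2 (h j h1)
    have heq := (Finset.sum_eq_sum_iff_of_le hle).mp hs
    exact hne (funext fun j => heq j (Finset.mem_univ j))
  · by_contra h
    push_neg at h
    have hle : ∀ j ∈ Finset.univ, g j ≤ f j := by
      intro j _
      rcases hzf j with h1 | h1 <;> rcases hzg j with h2 | h2 <;> first
        | omega
        | exact absurd h2 (h j h1)
    have heq := (Finset.sum_eq_sum_iff_of_le hle).mp hs.symm
    exact hne (funext fun j => (heq j (Finset.mem_univ j)).symm)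

lemma incomp_same {g1 g0 : Matrix (Fin m) (Fin m) ℕ → Matrix (Fin m) (Fin m) ℕ}
    {k1 k0 : ℕ} {D₂ : Set (Matrix (Fin m) (Fin m) ℕ)} (hm : 0 < m)
    (hD₂ : D₂ ⊆ classA m 2)
    (hg1 : ∀ X ∈ classA m 2, g1 X ∈ classA m k1)
    (hg0 : ∀ X ∈ classA m 2, g0 X ∈ classA m k0)
    (hI1 : ∀ X Y, X ∈ D₂ → Y ∈ D₂ → X ≠ Y → Incomp (g1 X) (g1 Y))
    (hI0 : ∀ X Y, X ∈ D₂ → Y ∈ D₂ → X ≠ Y → Incomp (g0 X) (g0 Y))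
    {A : Matrix (Fin a) (Fin a) ℕ}
    {B B' : Fin a × Fin a → Matrix (Fin m) (Fin m) ℕ}
    (hB : ∀ pq, B pq ∈ D₂) (hB' : ∀ pq, B' pq ∈ D₂)
    (p q : Fin a) (hne : B (p,q) ≠ B' (p,q)) :
    Incomp (bigM a m g1 g0 A B) (bigM a m g1 g0 A B') := by
  have hGc : ∀ p' q', p' < a → q' < a →
      GofN a m g1 g0 A B p' q' ∈ classA m (if fe A p' q' = 1 then k1 else k0) :=
    fun p' q' hp hq => GofN_class hD₂ hg1 hg0 hB hp hq
  have hGc' : ∀ p' q', p' < a → q' < a →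
      GofN a m g1 g0 A B' p' q' ∈ classA m (if fe A p' q' = 1 then k1 else k0) :=
    fun p' q' hp hq => GofN_class hD₂ hg1 hg0 hB' hp hq
  have hblk : Incomp (GofN a m g1 g0 A B p.val q.val) (GofN a m g1 g0 A B' p.val q.val) := by
    rw [GofN_fin, GofN_fin]
    split
    · exact hI1 _ _ (hB _) (hB' _) hne
    · exact hI0 _ _ (hB _) (hB' _) hne
  exact incomp_mk_of_block hm hGc hGc' hblk.1 hblk.2

set_option maxHeartbeats 1000000 in
lemma incomp_diff_generic (hm2 : 2 ≤ m) (hm4 : m ≠ 4)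
    {g1 g0 : Matrix (Fin m) (Fin m) ℕ → Matrix (Fin m) (Fin m) ℕ}
    {D₂ : Set (Matrix (Fin m) (Fin m) ℕ)} (hD₂ : D₂ ⊆ classA m 2)
    (hg1 : ∀ X ∈ classA m 2, g1 X ∈ classA m 2)
    (hg0 : ∀ X ∈ classA m 2, g0 X ∈ classA m (m-2))
    {A A' : Matrix (Fin a) (Fin a) ℕ}
    (hA : A ∈ classA a (a/2)) (hA' : A' ∈ classA a (a/2)) (hinc : Incomp A A')
    {B B' : Fin a × Fin a → Matrix (Fin m) (Fin m) ℕ}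
    (hB : ∀ pq, B pq ∈ D₂) (hB' : ∀ pq, B' pq ∈ D₂) :
    Incomp (bigM a m g1 g0 A B) (bigM a m g1 g0 A' B') := by
  have hm : 0 < m := by omega
  have hGc : ∀ p q, p < a → q < a →
      GofN a m g1 g0 A B p q ∈ classA m (if fe A p q = 1 then 2 else m-2) :=
    fun p q hp hq => GofN_class hD₂ hg1 hg0 hB hp hq
  have hGc' : ∀ p q, p < a → q < a →
      GofN a m g1 g0 A' B' p q ∈ classA m (if fe A' p q = 1 then 2 else m-2) :=
    fun p q hp hq => GofN_class hD₂ hg1 hg0 hB' hp hq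
  obtain ⟨hn1, hn2⟩ := hinc
  rw [not_brle_iff] at hn1 hn2
  obtain ⟨i1, j1, h1⟩ := hn1
  obtain ⟨i2, j2, h2⟩ := hn2
  rw [sigmaM_eq_sigN, sigmaM_eq_sigN] at h1 h2
  have hml : m - 1 < m := by omega
  have hb1 : sigN A' i1.val j1.val ≤ (i1.val+1)*(j1.val+1) := sigN_le hA'.1 _ _
  have hb2 : sigN A i2.val j2.val ≤ (i2.val+1)*(j2.val+1) := sigN_le hA.1 _ _
  have c1 : sigmaM (bigM a m g1 g0 A B) (pinF i1 ⟨m-1, hml⟩) (pinF j1 ⟨m-1, hml⟩)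
      = m * (2 * sigN A i1.val j1.val
          + (m-2) * ((i1.val+1) * (j1.val+1) - sigN A i1.val j1.val)) :=
    corner_A (a := a) hm hA.1 hGc i1 j1
  have c1' : sigmaM (bigM a m g1 g0 A' B') (pinF i1 ⟨m-1, hml⟩) (pinF j1 ⟨m-1, hml⟩)
      = m * (2 * sigN A' i1.val j1.val
          + (m-2) * ((i1.val+1) * (j1.val+1) - sigN A' i1.val j1.val)) :=
    corner_A (a := a) hm hA'.1 hGc' i1 j1
  have c2 : sigmaM (bigM a m g1 g0 A B) (pinF i2 ⟨m-1, hml⟩) (pinF j2 ⟨m-1, hml⟩)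
      = m * (2 * sigN A i2.val j2.val
          + (m-2) * ((i2.val+1) * (j2.val+1) - sigN A i2.val j2.val)) :=
    corner_A (a := a) hm hA.1 hGc i2 j2
  have c2' : sigmaM (bigM a m g1 g0 A' B') (pinF i2 ⟨m-1, hml⟩) (pinF j2 ⟨m-1, hml⟩)
      = m * (2 * sigN A' i2.val j2.val
          + (m-2) * ((i2.val+1) * (j2.val+1) - sigN A' i2.val j2.val)) :=
    corner_A (a := a) hm hA'.1 hGc' i2 j2
  have hcase : m = 2 ∨ m = 3 ∨ 5 ≤ m := by omega
  constructor
  · rw [not_brle_iff]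
    rcases hcase with h | h | h
    · refine ⟨pinF i1 ⟨m-1, hml⟩, pinF j1 ⟨m-1, hml⟩, ?_⟩
      rw [c1, c1']
      exact mul_lt_mul_of_pos_left (Vlt_small (Or.inl h) h1 hb1) hm
    · refine ⟨pinF i1 ⟨m-1, hml⟩, pinF j1 ⟨m-1, hml⟩, ?_⟩
      rw [c1, c1']
      exact mul_lt_mul_of_pos_left (Vlt_small (Or.inr h) h1 hb1) hm
    · refine ⟨pinF i2 ⟨m-1, hml⟩, pinF j2 ⟨m-1, hml⟩, ?_⟩
      rw [c2, c2']
      exact mul_lt_mul_of_pos_left (Vlt_big h h2 hb2) hm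
  · rw [not_brle_iff]
    rcases hcase with h | h | h
    · refine ⟨pinF i2 ⟨m-1, hml⟩, pinF j2 ⟨m-1, hml⟩, ?_⟩
      rw [c2', c2]
      exact mul_lt_mul_of_pos_left (Vlt_small (Or.inl h) h2 hb2) hm
    · refine ⟨pinF i2 ⟨m-1, hml⟩, pinF j2 ⟨m-1, hml⟩, ?_⟩
      rw [c2', c2]
      exact mul_lt_mul_of_pos_left (Vlt_small (Or.inr h) h2 hb2) hm
    · refine ⟨pinF i1 ⟨m-1, hml⟩, pinF j1 ⟨m-1, hml⟩, ?_⟩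
      rw [c1', c1]
      exact mul_lt_mul_of_pos_left (Vlt_big h h1 hb1) hm

lemma incomp_diff_four
    {g1 g0 : Matrix (Fin 4) (Fin 4) ℕ → Matrix (Fin 4) (Fin 4) ℕ}
    {D₂ : Set (Matrix (Fin 4) (Fin 4) ℕ)} (hD₂ : D₂ ⊆ classA 4 2)
    (hg1 : ∀ X ∈ classA 4 2, g1 X ∈ classA 4 2)
    (hg0 : ∀ X ∈ classA 4 2, g0 X ∈ classA 4 2)
    (hcross : ∀ X ∈ classA 4 2, ∀ Y ∈ classA 4 2, ¬ brle (g1 X) (g0 Y))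
    {A A' : Matrix (Fin a) (Fin a) ℕ}
    (hA : A ∈ classA a (a/2)) (hA' : A' ∈ classA a (a/2)) (hne : A ≠ A')
    {B B' : Fin a × Fin a → Matrix (Fin 4) (Fin 4) ℕ}
    (hB : ∀ pq, B pq ∈ D₂) (hB' : ∀ pq, B' pq ∈ D₂) :
    Incomp (bigM a 4 g1 g0 A B) (bigM a 4 g1 g0 A' B') := by
  have hGc : ∀ p q, p < a → q < a →
      GofN a 4 g1 g0 A B p q ∈ classA 4 ((fun _ _ => 2) p q) := by
    intro p q hp hq
    have := GofN_class (A := A) hD₂ hg1 hg0 hB hp hq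
    simpa using this
  have hGc' : ∀ p q, p < a → q < a →
      GofN a 4 g1 g0 A' B' p q ∈ classA 4 ((fun _ _ => 2) p q) := by
    intro p q hp hq
    have := GofN_class (A := A') hD₂ hg1 hg0 hB' hp hq
    simpa using this
  -- find a row where they differ
  obtain ⟨p, hp⟩ : ∃ p, A p ≠ A' p := by
    by_contra hc
    push_neg at hc
    exact hne (funext hc)
  obtain ⟨⟨j1, hj1a, hj1b⟩, ⟨j2, hj2a, hj2b⟩⟩ :=
    exists_flip (fun j => hA.1 p j) (fun j => hA'.1 p j)
      (by rw [show (∑ j, A p j) = rowSum A p from rfl,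
              show (∑ j, A' p j) = rowSum A' p from rfl, hA.2.1 p, hA'.2.1 p]) hp
  have hblk1 : ¬ brle (GofN a 4 g1 g0 A B p.val j1.val) (GofN a 4 g1 g0 A' B' p.val j1.val) := by
    rw [GofN_fin, GofN_fin, if_pos hj1a, if_neg (by omega)]
    exact hcross _ (hD₂ (hB _)) _ (hD₂ (hB' _))
  have hblk2 : ¬ brle (GofN a 4 g1 g0 A' B' p.val j2.val) (GofN a 4 g1 g0 A B p.val j2.val) := by
    rw [GofN_fin, GofN_fin, if_pos hj2b, if_neg (by omega)]
    exact hcross _ (hD₂ (hB' _)) _ (hD₂ (hB _))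
  exact incomp_mk_of_block (by norm_num) hGc hGc' hblk1 hblk2

end Halfreg

namespace Halfreg
open Finset

instance ZeroOne.dec {M N : ℕ} (A : Matrix (Fin M) (Fin N) ℕ) : Decidable (ZeroOne A) :=
  @Fintype.decidableForallFintype _ _ (fun _ => @Fintype.decidableForallFintype _ _ (fun _ => instDecidableOr) _) _

instance classA.dec {n k : ℕ} (A : Matrix (Fin n) (Fin n) ℕ) : Decidable (A ∈ classA n k) :=
  inferInstanceAs (Decidable (ZeroOne A ∧ (∀ i, rowSum A i = k) ∧ (∀ j, colSum A j = k)))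

def L90 : List (Matrix (Fin 4) (Fin 4) ℕ) :=
[!![0, 0, 1, 1; 0, 0, 1, 1; 1, 1, 0, 0; 1, 1, 0, 0],
 !![0, 0, 1, 1; 0, 1, 0, 1; 1, 0, 1, 0; 1, 1, 0, 0],
 !![0, 0, 1, 1; 0, 1, 0, 1; 1, 1, 0, 0; 1, 0, 1, 0],
 !![0, 0, 1, 1; 0, 1, 1, 0; 1, 0, 0, 1; 1, 1, 0, 0],
 !![0, 0, 1, 1; 0, 1, 1, 0; 1, 1, 0, 0; 1, 0, 0, 1],
 !![0, 0, 1, 1; 1, 0, 0, 1; 0, 1, 1, 0; 1, 1, 0, 0],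
 !![0, 0, 1, 1; 1, 0, 0, 1; 1, 1, 0, 0; 0, 1, 1, 0],
 !![0, 0, 1, 1; 1, 0, 1, 0; 0, 1, 0, 1; 1, 1, 0, 0],
 !![0, 0, 1, 1; 1, 0, 1, 0; 1, 1, 0, 0; 0, 1, 0, 1],
 !![0, 0, 1, 1; 1, 1, 0, 0; 0, 0, 1, 1; 1, 1, 0, 0],
 !![0, 0, 1, 1; 1, 1, 0, 0; 0, 1, 0, 1; 1, 0, 1, 0],
 !![0, 0, 1, 1; 1, 1, 0, 0; 0, 1, 1, 0; 1, 0, 0, 1],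
 !![0, 0, 1, 1; 1, 1, 0, 0; 1, 0, 0, 1; 0, 1, 1, 0],
 !![0, 0, 1, 1; 1, 1, 0, 0; 1, 0, 1, 0; 0, 1, 0, 1],
 !![0, 0, 1, 1; 1, 1, 0, 0; 1, 1, 0, 0; 0, 0, 1, 1],
 !![0, 1, 0, 1; 0, 0, 1, 1; 1, 0, 1, 0; 1, 1, 0, 0],
 !![0, 1, 0, 1; 0, 0, 1, 1; 1, 1, 0, 0; 1, 0, 1, 0],
 !![0, 1, 0, 1; 0, 1, 0, 1; 1, 0, 1, 0; 1, 0, 1, 0],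
 !![0, 1, 0, 1; 0, 1, 1, 0; 1, 0, 0, 1; 1, 0, 1, 0],
 !![0, 1, 0, 1; 0, 1, 1, 0; 1, 0, 1, 0; 1, 0, 0, 1],
 !![0, 1, 0, 1; 1, 0, 0, 1; 0, 1, 1, 0; 1, 0, 1, 0],
 !![0, 1, 0, 1; 1, 0, 0, 1; 1, 0, 1, 0; 0, 1, 1, 0],
 !![0, 1, 0, 1; 1, 0, 1, 0; 0, 0, 1, 1; 1, 1, 0, 0],
 !![0, 1, 0, 1; 1, 0, 1, 0; 0, 1, 0, 1; 1, 0, 1, 0],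
 !![0, 1, 0, 1; 1, 0, 1, 0; 0, 1, 1, 0; 1, 0, 0, 1],
 !![0, 1, 0, 1; 1, 0, 1, 0; 1, 0, 0, 1; 0, 1, 1, 0],
 !![0, 1, 0, 1; 1, 0, 1, 0; 1, 0, 1, 0; 0, 1, 0, 1],
 !![0, 1, 0, 1; 1, 0, 1, 0; 1, 1, 0, 0; 0, 0, 1, 1],
 !![0, 1, 0, 1; 1, 1, 0, 0; 0, 0, 1, 1; 1, 0, 1, 0],
 !![0, 1, 0, 1; 1, 1, 0, 0; 1, 0, 1, 0; 0, 0, 1, 1],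
 !![0, 1, 1, 0; 0, 0, 1, 1; 1, 0, 0, 1; 1, 1, 0, 0],
 !![0, 1, 1, 0; 0, 0, 1, 1; 1, 1, 0, 0; 1, 0, 0, 1],
 !![0, 1, 1, 0; 0, 1, 0, 1; 1, 0, 0, 1; 1, 0, 1, 0],
 !![0, 1, 1, 0; 0, 1, 0, 1; 1, 0, 1, 0; 1, 0, 0, 1],
 !![0, 1, 1, 0; 0, 1, 1, 0; 1, 0, 0, 1; 1, 0, 0, 1],
 !![0, 1, 1, 0; 1, 0, 0, 1; 0, 0, 1, 1; 1, 1, 0, 0],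
 !![0, 1, 1, 0; 1, 0, 0, 1; 0, 1, 0, 1; 1, 0, 1, 0],
 !![0, 1, 1, 0; 1, 0, 0, 1; 0, 1, 1, 0; 1, 0, 0, 1],
 !![0, 1, 1, 0; 1, 0, 0, 1; 1, 0, 0, 1; 0, 1, 1, 0],
 !![0, 1, 1, 0; 1, 0, 0, 1; 1, 0, 1, 0; 0, 1, 0, 1],
 !![0, 1, 1, 0; 1, 0, 0, 1; 1, 1, 0, 0; 0, 0, 1, 1],
 !![0, 1, 1, 0; 1, 0, 1, 0; 0, 1, 0, 1; 1, 0, 0, 1],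
 !![0, 1, 1, 0; 1, 0, 1, 0; 1, 0, 0, 1; 0, 1, 0, 1],
 !![0, 1, 1, 0; 1, 1, 0, 0; 0, 0, 1, 1; 1, 0, 0, 1],
 !![0, 1, 1, 0; 1, 1, 0, 0; 1, 0, 0, 1; 0, 0, 1, 1],
 !![1, 0, 0, 1; 0, 0, 1, 1; 0, 1, 1, 0; 1, 1, 0, 0],
 !![1, 0, 0, 1; 0, 0, 1, 1; 1, 1, 0, 0; 0, 1, 1, 0],
 !![1, 0, 0, 1; 0, 1, 0, 1; 0, 1, 1, 0; 1, 0, 1, 0],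
 !![1, 0, 0, 1; 0, 1, 0, 1; 1, 0, 1, 0; 0, 1, 1, 0],
 !![1, 0, 0, 1; 0, 1, 1, 0; 0, 0, 1, 1; 1, 1, 0, 0],
 !![1, 0, 0, 1; 0, 1, 1, 0; 0, 1, 0, 1; 1, 0, 1, 0],
 !![1, 0, 0, 1; 0, 1, 1, 0; 0, 1, 1, 0; 1, 0, 0, 1],
 !![1, 0, 0, 1; 0, 1, 1, 0; 1, 0, 0, 1; 0, 1, 1, 0],
 !![1, 0, 0, 1; 0, 1, 1, 0; 1, 0, 1, 0; 0, 1, 0, 1],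
 !![1, 0, 0, 1; 0, 1, 1, 0; 1, 1, 0, 0; 0, 0, 1, 1],
 !![1, 0, 0, 1; 1, 0, 0, 1; 0, 1, 1, 0; 0, 1, 1, 0],
 !![1, 0, 0, 1; 1, 0, 1, 0; 0, 1, 0, 1; 0, 1, 1, 0],
 !![1, 0, 0, 1; 1, 0, 1, 0; 0, 1, 1, 0; 0, 1, 0, 1],
 !![1, 0, 0, 1; 1, 1, 0, 0; 0, 0, 1, 1; 0, 1, 1, 0],
 !![1, 0, 0, 1; 1, 1, 0, 0; 0, 1, 1, 0; 0, 0, 1, 1],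
 !![1, 0, 1, 0; 0, 0, 1, 1; 0, 1, 0, 1; 1, 1, 0, 0],
 !![1, 0, 1, 0; 0, 0, 1, 1; 1, 1, 0, 0; 0, 1, 0, 1],
 !![1, 0, 1, 0; 0, 1, 0, 1; 0, 0, 1, 1; 1, 1, 0, 0],
 !![1, 0, 1, 0; 0, 1, 0, 1; 0, 1, 0, 1; 1, 0, 1, 0],
 !![1, 0, 1, 0; 0, 1, 0, 1; 0, 1, 1, 0; 1, 0, 0, 1],
 !![1, 0, 1, 0; 0, 1, 0, 1; 1, 0, 0, 1; 0, 1, 1, 0],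
 !![1, 0, 1, 0; 0, 1, 0, 1; 1, 0, 1, 0; 0, 1, 0, 1],
 !![1, 0, 1, 0; 0, 1, 0, 1; 1, 1, 0, 0; 0, 0, 1, 1],
 !![1, 0, 1, 0; 0, 1, 1, 0; 0, 1, 0, 1; 1, 0, 0, 1],
 !![1, 0, 1, 0; 0, 1, 1, 0; 1, 0, 0, 1; 0, 1, 0, 1],
 !![1, 0, 1, 0; 1, 0, 0, 1; 0, 1, 0, 1; 0, 1, 1, 0],
 !![1, 0, 1, 0; 1, 0, 0, 1; 0, 1, 1, 0; 0, 1, 0, 1],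
 !![1, 0, 1, 0; 1, 0, 1, 0; 0, 1, 0, 1; 0, 1, 0, 1],
 !![1, 0, 1, 0; 1, 1, 0, 0; 0, 0, 1, 1; 0, 1, 0, 1],
 !![1, 0, 1, 0; 1, 1, 0, 0; 0, 1, 0, 1; 0, 0, 1, 1],
 !![1, 1, 0, 0; 0, 0, 1, 1; 0, 0, 1, 1; 1, 1, 0, 0],
 !![1, 1, 0, 0; 0, 0, 1, 1; 0, 1, 0, 1; 1, 0, 1, 0],
 !![1, 1, 0, 0; 0, 0, 1, 1; 0, 1, 1, 0; 1, 0, 0, 1],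
 !![1, 1, 0, 0; 0, 0, 1, 1; 1, 0, 0, 1; 0, 1, 1, 0],
 !![1, 1, 0, 0; 0, 0, 1, 1; 1, 0, 1, 0; 0, 1, 0, 1],
 !![1, 1, 0, 0; 0, 0, 1, 1; 1, 1, 0, 0; 0, 0, 1, 1],
 !![1, 1, 0, 0; 0, 1, 0, 1; 0, 0, 1, 1; 1, 0, 1, 0],
 !![1, 1, 0, 0; 0, 1, 0, 1; 1, 0, 1, 0; 0, 0, 1, 1],
 !![1, 1, 0, 0; 0, 1, 1, 0; 0, 0, 1, 1; 1, 0, 0, 1],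
 !![1, 1, 0, 0; 0, 1, 1, 0; 1, 0, 0, 1; 0, 0, 1, 1],
 !![1, 1, 0, 0; 1, 0, 0, 1; 0, 0, 1, 1; 0, 1, 1, 0],
 !![1, 1, 0, 0; 1, 0, 0, 1; 0, 1, 1, 0; 0, 0, 1, 1],
 !![1, 1, 0, 0; 1, 0, 1, 0; 0, 0, 1, 1; 0, 1, 0, 1],
 !![1, 1, 0, 0; 1, 0, 1, 0; 0, 1, 0, 1; 0, 0, 1, 1],
 !![1, 1, 0, 0; 1, 1, 0, 0; 0, 0, 1, 1; 0, 0, 1, 1]]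

def S1L : List (Matrix (Fin 4) (Fin 4) ℕ) :=
[!![1, 0, 1, 0; 0, 0, 1, 1; 0, 1, 0, 1; 1, 1, 0, 0],
 !![0, 1, 1, 0; 1, 0, 0, 1; 0, 0, 1, 1; 1, 1, 0, 0],
 !![1, 0, 0, 1; 0, 0, 1, 1; 1, 1, 0, 0; 0, 1, 1, 0],
 !![0, 1, 1, 0; 0, 0, 1, 1; 1, 1, 0, 0; 1, 0, 0, 1],
 !![1, 0, 0, 1; 0, 1, 0, 1; 0, 1, 1, 0; 1, 0, 1, 0],
 !![1, 0, 0, 1; 0, 1, 1, 0; 0, 0, 1, 1; 1, 1, 0, 0],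
 !![0, 1, 0, 1; 1, 0, 1, 0; 0, 1, 0, 1; 1, 0, 1, 0],
 !![0, 0, 1, 1; 1, 1, 0, 0; 1, 0, 0, 1; 0, 1, 1, 0],
 !![0, 1, 1, 0; 0, 1, 0, 1; 1, 0, 0, 1; 1, 0, 1, 0],
 !![0, 1, 0, 1; 1, 0, 0, 1; 1, 0, 1, 0; 0, 1, 1, 0],
 !![0, 1, 0, 1; 0, 1, 1, 0; 1, 0, 1, 0; 1, 0, 0, 1],
 !![0, 0, 1, 1; 1, 1, 0, 0; 0, 1, 1, 0; 1, 0, 0, 1],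
 !![0, 0, 1, 1; 1, 0, 1, 0; 1, 1, 0, 0; 0, 1, 0, 1]]

def S0L : List (Matrix (Fin 4) (Fin 4) ℕ) :=
[!![1, 0, 1, 0; 0, 1, 0, 1; 1, 0, 1, 0; 0, 1, 0, 1],
 !![1, 0, 1, 0; 1, 0, 0, 1; 0, 1, 0, 1; 0, 1, 1, 0],
 !![1, 0, 0, 1; 1, 0, 1, 0; 0, 1, 1, 0; 0, 1, 0, 1],
 !![0, 1, 1, 0; 1, 1, 0, 0; 0, 0, 1, 1; 1, 0, 0, 1],
 !![1, 0, 0, 1; 0, 1, 1, 0; 1, 1, 0, 0; 0, 0, 1, 1],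
 !![1, 1, 0, 0; 0, 0, 1, 1; 0, 1, 1, 0; 1, 0, 0, 1],
 !![1, 1, 0, 0; 0, 1, 0, 1; 0, 0, 1, 1; 1, 0, 1, 0],
 !![0, 1, 1, 0; 1, 0, 1, 0; 1, 0, 0, 1; 0, 1, 0, 1],
 !![1, 1, 0, 0; 0, 0, 1, 1; 1, 0, 0, 1; 0, 1, 1, 0],
 !![1, 0, 0, 1; 1, 1, 0, 0; 0, 0, 1, 1; 0, 1, 1, 0],
 !![1, 0, 1, 0; 0, 1, 1, 0; 0, 1, 0, 1; 1, 0, 0, 1],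
 !![0, 1, 1, 0; 1, 0, 0, 1; 1, 1, 0, 0; 0, 0, 1, 1],
 !![0, 1, 0, 1; 1, 1, 0, 0; 1, 0, 1, 0; 0, 0, 1, 1]]

def cidxL : List ℕ := [12, 12, 12, 11, 12, 7, 7, 11, 12, 11, 11, 11, 7, 11, 11, 10, 10, 10, 10, 10, 9, 9, 6, 6, 10, 9, 7, 11, 6, 12, 3, 3, 8, 3, 3, 1, 8, 10, 8, 7, 11, 3, 7, 3, 3, 2, 2, 4, 2, 5, 4, 4, 9, 4, 4, 2, 2, 2, 9, 9, 0, 0, 1, 1, 10, 1, 0, 4, 10, 10, 1, 0, 1, 2, 3, 5, 5, 5, 8, 5, 4, 6, 5, 6, 7, 8, 9, 10, 11, 12]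

def R6 : List (Fin 4 → ℕ) :=
  [![0,0,1,1], ![0,1,0,1], ![0,1,1,0], ![1,0,0,1], ![1,0,1,0], ![1,1,0,0]]

set_option maxRecDepth 40000 in
lemma key90 : ∀ v0 ∈ R6, ∀ v1 ∈ R6, ∀ v2 ∈ R6, ∀ v3 ∈ R6,
    (∀ j : Fin 4, v0 j + v1 j + v2 j + v3 j = 2) →
    (Matrix.of ![v0, v1, v2, v3]) ∈ L90 := by decide

set_option maxRecDepth 40000 in
lemma chaincond : ∀ k ∈ List.range 90, ∀ l ∈ List.range 90,
    cidxL.getD k 0 = cidxL.getD l 0 →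
    brle (L90.getD k 0) (L90.getD l 0) ∨ brle (L90.getD l 0) (L90.getD k 0) := by decide

set_option maxRecDepth 40000 in
lemma crossSL : ∀ x ∈ S1L, ∀ y ∈ S0L, ¬ brle x y := by decide

set_option maxRecDepth 40000 in
lemma S1class : ∀ M ∈ S1L, M ∈ classA 4 2 := by decide

set_option maxRecDepth 40000 in
lemma S0class : ∀ M ∈ S0L, M ∈ classA 4 2 := by decide

set_option maxRecDepth 40000 in
lemma anti1 : ∀ x ∈ S1L, ∀ y ∈ S1L, x = y ∨ Incomp x y := by decide

set_option maxRecDepth 40000 in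
lemma anti0 : ∀ x ∈ S0L, ∀ y ∈ S0L, x = y ∨ Incomp x y := by decide

set_option maxRecDepth 40000 in
lemma cidx_lt : ∀ k ∈ List.range 90, cidxL.getD k 0 < 13 := by decide

set_option maxRecDepth 40000 in
lemma inj1 : ∀ i ∈ List.range 13, ∀ j ∈ List.range 13,
    S1L.getD i 0 = S1L.getD j 0 → i = j := by decide

set_option maxRecDepth 40000 in
lemma inj0 : ∀ i ∈ List.range 13, ∀ j ∈ List.range 13,
    S0L.getD i 0 = S0L.getD j 0 → i = j := by decide

lemma L90_len : L90.length = 90 := by decide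
lemma S1L_len : S1L.length = 13 := by decide
lemma S0L_len : S0L.length = 13 := by decide

lemma row_mem6 (r : Fin 4 → ℕ) (hz : ∀ j, r j = 0 ∨ r j = 1)
    (hs : r 0 + r 1 + r 2 + r 3 = 2) : ∃ v ∈ R6, r = v := by
  have h0 := hz 0
  have h1 := hz 1
  have h2 := hz 2
  have h3 := hz 3
  rcases h0 with h0 | h0 <;> rcases h1 with h1 | h1 <;> rcases h2 with h2 | h2 <;>
    rcases h3 with h3 | h3 <;>
    first
      | omega
      | (first
          | (refine ⟨![0,0,1,1], by decide, ?_⟩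
             funext j
             fin_cases j <;> first | exact h0 | exact h1 | exact h2 | exact h3
             )
          | (refine ⟨![0,1,0,1], by decide, ?_⟩
             funext j
             fin_cases j <;> first | exact h0 | exact h1 | exact h2 | exact h3
             )
          | (refine ⟨![0,1,1,0], by decide, ?_⟩
             funext j
             fin_cases j <;> first | exact h0 | exact h1 | exact h2 | exact h3
             )
          | (refine ⟨![1,0,0,1], by decide, ?_⟩
             funext j
             fin_cases j <;> first | exact h0 | exact h1 | exact h2 | exact h3
             )
          | (refine ⟨![1,0,1,0], by decide, ?_⟩
             funext j
             fin_cases j <;> first | exact h0 | exact h1 | exact h2 | exact h3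
             )
          | (refine ⟨![1,1,0,0], by decide, ?_⟩
             funext j
             fin_cases j <;> first | exact h0 | exact h1 | exact h2 | exact h3
             ))

lemma enum42 (X : Matrix (Fin 4) (Fin 4) ℕ) (hX : X ∈ classA 4 2) : X ∈ L90 := by
  obtain ⟨hz, hr, hc⟩ := hX
  obtain ⟨v0, hv0, he0⟩ := row_mem6 (X 0) (hz 0) (by
    have := hr 0
    rw [rowSum, Fin.sum_univ_four] at this
    exact this)
  obtain ⟨v1, hv1, he1⟩ := row_mem6 (X 1) (hz 1) (by
    have := hr 1
    rw [rowSum, Fin.sum_univ_four] at this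
    exact this)
  obtain ⟨v2, hv2, he2⟩ := row_mem6 (X 2) (hz 2) (by
    have := hr 2
    rw [rowSum, Fin.sum_univ_four] at this
    exact this)
  obtain ⟨v3, hv3, he3⟩ := row_mem6 (X 3) (hz 3) (by
    have := hr 3
    rw [rowSum, Fin.sum_univ_four] at this
    exact this)
  have hcols : ∀ j : Fin 4, v0 j + v1 j + v2 j + v3 j = 2 := by
    intro j
    have := hc j
    rw [colSum, Fin.sum_univ_four] at this
    rw [← he0, ← he1, ← he2, ← he3]
    exact this
  have hXeq : X = Matrix.of ![v0, v1, v2, v3] := by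
    funext i j
    fin_cases i
    · exact congrFun he0 j
    · exact congrFun he1 j
    · exact congrFun he2 j
    · exact congrFun he3 j
  rw [hXeq]
  exact key90 v0 hv0 v1 hv1 v2 hv2 v3 hv3 hcols

/-- the two encodings used in the case `m = 4` -/
def g1c (X : Matrix (Fin 4) (Fin 4) ℕ) : Matrix (Fin 4) (Fin 4) ℕ :=
  S1L.getD (cidxL.getD (L90.idxOf X) 0) 0

def g0c (X : Matrix (Fin 4) (Fin 4) ℕ) : Matrix (Fin 4) (Fin 4) ℕ :=
  S0L.getD (cidxL.getD (L90.idxOf X) 0) 0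

lemma idx_facts {X : Matrix (Fin 4) (Fin 4) ℕ} (hX : X ∈ classA 4 2) :
    L90.idxOf X < 90 ∧ L90.getD (L90.idxOf X) 0 = X := by
  have hmem : X ∈ L90 := enum42 X hX
  have hk : L90.idxOf X < L90.length := List.idxOf_lt_length_iff.mpr hmem
  refine ⟨by rw [← L90_len]; exact hk, ?_⟩
  rw [List.getD_eq_getElem _ _ hk]
  exact List.getElem_idxOf hk

lemma g1c_mem (X : Matrix (Fin 4) (Fin 4) ℕ) (hX : X ∈ classA 4 2) : g1c X ∈ S1L := by
  obtain ⟨hk, _⟩ := idx_facts hX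
  have hc := cidx_lt _ (List.mem_range.mpr hk)
  unfold g1c
  rw [List.getD_eq_getElem _ _ (by rw [S1L_len]; exact hc)]
  exact List.getElem_mem _

lemma g0c_mem (X : Matrix (Fin 4) (Fin 4) ℕ) (hX : X ∈ classA 4 2) : g0c X ∈ S0L := by
  obtain ⟨hk, _⟩ := idx_facts hX
  have hc := cidx_lt _ (List.mem_range.mpr hk)
  unfold g0c
  rw [List.getD_eq_getElem _ _ (by rw [S0L_len]; exact hc)]
  exact List.getElem_mem _

lemma g1c_class : ∀ X ∈ classA 4 2, g1c X ∈ classA 4 2 :=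
  fun X hX => S1class _ (g1c_mem X hX)

lemma g0c_class : ∀ X ∈ classA 4 2, g0c X ∈ classA 4 2 :=
  fun X hX => S0class _ (g0c_mem X hX)

lemma cidx_ne {X Y : Matrix (Fin 4) (Fin 4) ℕ} (hX : X ∈ classA 4 2)
    (hY : Y ∈ classA 4 2) (hinc : Incomp X Y) :
    cidxL.getD (L90.idxOf X) 0 ≠ cidxL.getD (L90.idxOf Y) 0 := by
  obtain ⟨hkX, heX⟩ := idx_facts hX
  obtain ⟨hkY, heY⟩ := idx_facts hY
  intro hcontra
  have := chaincond _ (List.mem_range.mpr hkX) _ (List.mem_range.mpr hkY) hcontra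
  rw [heX, heY] at this
  rcases this with h | h
  · exact hinc.1 h
  · exact hinc.2 h

lemma g1c_incomp {X Y : Matrix (Fin 4) (Fin 4) ℕ} (hX : X ∈ classA 4 2)
    (hY : Y ∈ classA 4 2) (hinc : Incomp X Y) : Incomp (g1c X) (g1c Y) := by
  obtain ⟨hkX, heX⟩ := idx_facts hX
  obtain ⟨hkY, heY⟩ := idx_facts hY
  have hcX := cidx_lt _ (List.mem_range.mpr hkX)
  have hcY := cidx_lt _ (List.mem_range.mpr hkY)
  have hne := cidx_ne hX hY hinc
  have hvne : g1c X ≠ g1c Y := by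
    intro hcontra
    exact hne (inj1 _ (List.mem_range.mpr hcX) _ (List.mem_range.mpr hcY) hcontra)
  rcases anti1 _ (g1c_mem X hX) _ (g1c_mem Y hY) with h | h
  · exact absurd h hvne
  · exact h

lemma g0c_incomp {X Y : Matrix (Fin 4) (Fin 4) ℕ} (hX : X ∈ classA 4 2)
    (hY : Y ∈ classA 4 2) (hinc : Incomp X Y) : Incomp (g0c X) (g0c Y) := by
  obtain ⟨hkX, heX⟩ := idx_facts hX
  obtain ⟨hkY, heY⟩ := idx_facts hY
  have hcX := cidx_lt _ (List.mem_range.mpr hkX)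
  have hcY := cidx_lt _ (List.mem_range.mpr hkY)
  have hne := cidx_ne hX hY hinc
  have hvne : g0c X ≠ g0c Y := by
    intro hcontra
    exact hne (inj0 _ (List.mem_range.mpr hcX) _ (List.mem_range.mpr hcY) hcontra)
  rcases anti0 _ (g0c_mem X hX) _ (g0c_mem Y hY) with h | h
  · exact absurd h hvne
  · exact h

lemma g1c_g0c_cross : ∀ X ∈ classA 4 2, ∀ Y ∈ classA 4 2, ¬ brle (g1c X) (g0c Y) :=
  fun X hX Y hY => crossSL _ (g1c_mem X hX) _ (g0c_mem Y hY)

end Halfreg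

namespace Halfreg
open Finset

lemma incomp_ne {M N : ℕ} {X Y : Matrix (Fin M) (Fin N) ℕ} (h : Incomp X Y) : X ≠ Y := by
  intro hc
  subst hc
  exact h.1 (fun i j => le_refl _)

lemma core (a m : ℕ) (ha : 0 < a) (hm : 0 < m) (hae : Even a)
    (D₁ : Set (Matrix (Fin a) (Fin a) ℕ)) (D₂ : Set (Matrix (Fin m) (Fin m) ℕ))
    (hD₁ : D₁ ⊆ classA a (a/2)) (hD₂ : D₂ ⊆ classA m 2)
    (g1 g0 : Matrix (Fin m) (Fin m) ℕ → Matrix (Fin m) (Fin m) ℕ) (k1 k0 : ℕ)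
    (hk : k1 + k0 = m)
    (hg1 : ∀ X ∈ classA m 2, g1 X ∈ classA m k1)
    (hg0 : ∀ X ∈ classA m 2, g0 X ∈ classA m k0)
    (hI1 : ∀ X Y, X ∈ D₂ → Y ∈ D₂ → X ≠ Y → Incomp (g1 X) (g1 Y))
    (hI0 : ∀ X Y, X ∈ D₂ → Y ∈ D₂ → X ≠ Y → Incomp (g0 X) (g0 Y))
    (hdiff : ∀ A A', A ∈ D₁ → A' ∈ D₁ → A ≠ A' →
      ∀ B B' : Fin a × Fin a → Matrix (Fin m) (Fin m) ℕ,
      (∀ pq, B pq ∈ D₂) → (∀ pq, B' pq ∈ D₂) →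
      Incomp (bigM a m g1 g0 A B) (bigM a m g1 g0 A' B')) :
    ∃ D : Set (Matrix (Fin (a*m)) (Fin (a*m)) ℕ),
      D ⊆ classA (a*m) ((a*m)/2) ∧ IsAntichainB D ∧
      D.ncard = D₁.ncard * D₂.ncard ^ (a^2) := by
  classical
  set Bset : Set (Fin a × Fin a → Matrix (Fin m) (Fin m) ℕ) :=
    {B | ∀ pq, B pq ∈ D₂} with hBset
  set f : (Matrix (Fin a) (Fin a) ℕ) × (Fin a × Fin a → Matrix (Fin m) (Fin m) ℕ)
      → Matrix (Fin (a*m)) (Fin (a*m)) ℕ :=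
    fun P => bigM a m g1 g0 P.1 P.2 with hf
  have key : ∀ P ∈ D₁ ×ˢ Bset, ∀ P' ∈ D₁ ×ˢ Bset, P ≠ P' → Incomp (f P) (f P') := by
    rintro ⟨A, B⟩ hP ⟨A', B'⟩ hP' hne
    rw [Set.mem_prod] at hP hP'
    obtain ⟨hA, hB⟩ := hP
    obtain ⟨hA', hB'⟩ := hP'
    by_cases hAA : A = A'
    · subst hAA
      have hBB : B ≠ B' := by
        intro hc
        exact hne (by rw [hc])
      obtain ⟨pq, hpq⟩ : ∃ pq, B pq ≠ B' pq := by
        by_contra hc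
        push_neg at hc
        exact hBB (funext hc)
      exact incomp_same hm hD₂ hg1 hg0 hI1 hI0 hB hB' pq.1 pq.2 hpq
    · exact hdiff A A' hA hA' hAA B B' hB hB'
  refine ⟨f '' (D₁ ×ˢ Bset), ?_, ?_, ?_⟩
  · rintro M ⟨⟨A, B⟩, hP, rfl⟩
    rw [Set.mem_prod] at hP
    exact bigM_class hm hae hD₂ hg1 hg0 hk (hD₁ hP.1) hP.2
  · rintro M ⟨P, hP, rfl⟩ M' ⟨P', hP', rfl⟩ hne
    have hPP : P ≠ P' := by
      intro hc
      exact hne (by rw [hc])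
    exact key P hP P' hP' hPP
  · have hinj : Set.InjOn f (D₁ ×ˢ Bset) := by
      intro P hP P' hP' heq
      by_contra hne
      exact incomp_ne (key P hP P' hP' hne) heq
    rw [Set.ncard_image_of_injOn hinj]
    have h1 : (D₁ ×ˢ Bset).ncard = D₁.ncard * Bset.ncard := by
      rw [← Nat.card_coe_set_eq, ← Nat.card_coe_set_eq, ← Nat.card_coe_set_eq]
      rw [Nat.card_congr (Equiv.Set.prod D₁ Bset), Nat.card_prod]
    have h2 : Bset.ncard = D₂.ncard ^ (a*a) := by
      rw [← Nat.card_coe_set_eq, ← Nat.card_coe_set_eq]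
      have e : ↥Bset ≃ (Fin a × Fin a → ↥D₂) :=
        { toFun := fun F pq => ⟨F.1 pq, F.2 pq⟩
          invFun := fun g => ⟨fun pq => (g pq).1, fun pq => (g pq).2⟩
          left_inv := fun F => rfl
          right_inv := fun g => rfl }
      rw [Nat.card_congr e, Nat.card_pi]
      rw [Finset.prod_const, Finset.card_univ, Fintype.card_prod, Fintype.card_fin]
    rw [h1, h2, show a*a = a^2 from (pow_two a).symm]

end Halfreg

/-- For `a` even and `n = am`, antichains `D₁` of `A(a, a/2)`
and `D₂` of `A(m,2)` in the Bruhat order yield an antichain of size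
`|D₁|·|D₂|^{a²}` in the Bruhat order of `A(n, n/2)`. -/
theorem product_construction_halfreg (a m : ℕ) (ha : 0 < a) (hm : 0 < m)
    (hae : Even a)
    (D₁ : Set (Matrix (Fin a) (Fin a) ℕ)) (D₂ : Set (Matrix (Fin m) (Fin m) ℕ))
    (hD₁ : D₁ ⊆ classA a (a/2)) (hD₂ : D₂ ⊆ classA m 2)
    (hA₁ : IsAntichainB D₁) (hA₂ : IsAntichainB D₂) :
    ∃ D : Set (Matrix (Fin (a*m)) (Fin (a*m)) ℕ),
      D ⊆ classA (a*m) ((a*m)/2) ∧ IsAntichainB D ∧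
      D.ncard = D₁.ncard * D₂.ncard ^ (a^2) := by
  classical
  rcases eq_or_ne D₂ ∅ with hD2e | hD2ne
  · subst hD2e
    refine ⟨∅, by simp, ?_, ?_⟩
    · intro A hA
      exact absurd hA (Set.notMem_empty _)
    · rw [Set.ncard_empty, Set.ncard_empty, zero_pow (by positivity), mul_zero]
  · obtain ⟨B₀, hB₀⟩ := Set.nonempty_iff_ne_empty.mpr hD2ne
    have hB₀c := hD₂ hB₀
    have hm2 : 2 ≤ m := by
      have h1 : rowSum B₀ ⟨0, hm⟩ = 2 := hB₀c.2.1 _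
      have h2 : rowSum B₀ ⟨0, hm⟩ ≤ m := by
        rw [rowSum]
        calc ∑ j, B₀ ⟨0, hm⟩ j ≤ ∑ _j : Fin m, 1 :=
            Finset.sum_le_sum (fun j _ => by rcases hB₀c.1 ⟨0, hm⟩ j with h | h <;> omega)
          _ = m := by simp
      omega
    rcases eq_or_ne m 4 with hm4 | hm4
    · subst hm4
      exact Halfreg.core a 4 ha hm hae D₁ D₂ hD₁ hD₂ Halfreg.g1c Halfreg.g0c 2 2 (by norm_num)
        Halfreg.g1c_class Halfreg.g0c_class
        (fun X Y hX hY hne => Halfreg.g1c_incomp (hD₂ hX) (hD₂ hY) (hA₂ X hX Y hY hne))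
        (fun X Y hX hY hne => Halfreg.g0c_incomp (hD₂ hX) (hD₂ hY) (hA₂ X hX Y hY hne))
        (fun A A' hA hA' hne B B' hB hB' =>
          Halfreg.incomp_diff_four hD₂ Halfreg.g1c_class Halfreg.g0c_class
            Halfreg.g1c_g0c_cross (hD₁ hA) (hD₁ hA') hne hB hB')
    · exact Halfreg.core a m ha hm hae D₁ D₂ hD₁ hD₂ id Halfreg.complM 2 (m-2) (by omega)
        (fun X hX => hX)
        (fun X hX => Halfreg.complM_class hX)
        (fun X Y hX hY hne => hA₂ X hX Y hY hne)
        (fun X Y hX hY hne =>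
          Halfreg.incomp_compl (hD₂ hX).1 (hD₂ hY).1 (hA₂ X hX Y hY hne))
        (fun A A' hA hA' hne B B' hB hB' =>
          Halfreg.incomp_diff_generic hm2 hm4 hD₂ (fun X hX => hX)
            (fun X hX => Halfreg.complM_class hX) (hD₁ hA) (hD₁ hA')
            (hA₁ A hA A' hA' hne) hB hB')
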